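/- arXiv:1810.08595 — 2 statements merged into one kernel-verified Lean document; each statement's English description precedes it below -/
import Mathlib

section
/- For any two orthogonal projections P and Q on a finite-dimensional real inner product space, the operator norm of their commutator satisfies ‖PQ − QP‖₂ ≤ 1/2. -/
open ContinuousLinearMap in
lemma aux_refl_norm_le_one
    {E : Type*} [NormedAddCommGroup E] [InnerProductSpace ℝ E] [FiniteDimensional ℝ E]
    (P : E →L[ℝ] E) (hPsa : IsSelfAdjoint P) (hPidem : P * P = P) :
    ‖P + P - 1‖ ≤ 1 := by
  set R : E →L[ℝ] E := P + P - 1 with hR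
  have hRsa : IsSelfAdjoint R := by
    simp [IsSelfAdjoint, hR, star_sub, star_add, hPsa.star_eq]
  have hRsq : R * R = 1 := by
    simp only [hR, mul_sub, sub_mul, mul_add, add_mul, mul_one, one_mul, hPidem]
    abel
  apply ContinuousLinearMap.opNorm_le_bound _ zero_le_one
  intro x
  have h2 : R (R x) = x := by
    have := congrArg (fun T : E →L[ℝ] E => T x) hRsq
    simpa using this
  have h1 : ‖R x‖ ^ 2 = ‖x‖ ^ 2 := by
    have : inner ℝ (R x) (R x) = (inner ℝ x (R (R x)) : ℝ) := by
      rw [← ContinuousLinearMap.adjoint_inner_left, hRsa.adjoint_eq, real_inner_comm]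
    rw [h2] at this
    simpa [real_inner_self_eq_norm_sq] using this
  nlinarith [norm_nonneg (R x), norm_nonneg x]

/-- For any two orthogonal projections `P`, `Q` on a finite-dimensional real inner product
space, the operator norm of their commutator is at most `1/2`. -/
theorem commutator_opNorm_le_half
    {E : Type*} [NormedAddCommGroup E] [InnerProductSpace ℝ E] [FiniteDimensional ℝ E]
    (P Q : E →L[ℝ] E)
    (hPsa : IsSelfAdjoint P) (hPidem : P ∘L P = P)
    (hQsa : IsSelfAdjoint Q) (hQidem : Q ∘L Q = Q) :
    ‖P ∘L Q - Q ∘L P‖ ≤ 1 / 2 := by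
  have hPidem' : P * P = P := hPidem
  have hQidem' : Q * Q = Q := hQidem
  set R : E →L[ℝ] E := P + P - 1 with hR
  set S : E →L[ℝ] E := Q + Q - 1 with hS
  have hRn : ‖R‖ ≤ 1 := aux_refl_norm_le_one P hPsa hPidem'
  have hSn : ‖S‖ ≤ 1 := aux_refl_norm_le_one Q hQsa hQidem'
  set T : E →L[ℝ] E := P * Q - Q * P with hT
  have key : R * S - S * R = T + T + T + T := by
    simp only [hR, hS, hT, mul_sub, sub_mul, mul_add, add_mul, mul_one, one_mul]
    abel
  have h1 : ‖R * S - S * R‖ ≤ 2 := by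
    calc ‖R * S - S * R‖ ≤ ‖R * S‖ + ‖S * R‖ := norm_sub_le _ _
      _ ≤ ‖R‖ * ‖S‖ + ‖S‖ * ‖R‖ := by
          gcongr <;> exact norm_mul_le _ _
      _ ≤ 1 * 1 + 1 * 1 := by
          gcongr <;> first | exact hRn | exact hSn | positivity
      _ = 2 := by norm_num
  rw [key] at h1
  have h4 : ‖T‖ = ‖P ∘L Q - Q ∘L P‖ := rfl
  have h3 : ‖T + T + T + T‖ = 4 * ‖T‖ := by
    have : T + T + T + T = (4:ℝ) • T := by module
    rw [this, norm_smul (4:ℝ) T]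
    simp
  rw [h3] at h1
  linarith [h4 ▸ h1]
end

section
/- Let P_avg be a self-adjoint operator with eigenvalues in [0,1] on ℝ^{p₁×p₂} of the form P_avg = (1/B) Σ_ℓ P_{T_ℓ}, where each P_{T_ℓ} = P_{C_ℓ} ⊗ I + I ⊗ P_{R_ℓ} − P_{C_ℓ} ⊗ P_{R_ℓ} is a tangent-space projection, and define P_avg^C = (1/B) Σ_ℓ P_{C_ℓ} and P_avg^R = (1/B) Σ_ℓ P_{R_ℓ}. Let C ⊆ ℝ^{p₁}, R ⊆ ℝ^{p₂} be subspaces with σ_min(P_C P_avg^C P_C) ≥ α and σ_min(P_R P_avg^R P_R) ≥ α restricted to C and R respectively, and let T = T(C,R) with projection P_T. Then ‖P_T (I − P_avg) P_T‖₂ ≤ 4(1 − α), and consequently σ_min(P_T P_avg P_T) restricted to T is at least 1 − 4(1 − α). -/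
open Matrix

/-- Euclidean norm of a vector in `ℝ^p`. -/
noncomputable def vnorm {p : ℕ} (x : Fin p → ℝ) : ℝ :=
  Real.sqrt (∑ i, x i ^ 2)

/-- Frobenius norm of a real matrix. -/
noncomputable def fnorm {p₁ p₂ : ℕ} (M : Matrix (Fin p₁) (Fin p₂) ℝ) : ℝ :=
  Real.sqrt (Matrix.trace (Mᵀ * M))

namespace Prop7

noncomputable def ip {p₁ p₂ : ℕ} (X Y : Matrix (Fin p₁) (Fin p₂) ℝ) : ℝ :=
  Matrix.trace (Xᵀ * Y)

variable {p₁ p₂ : ℕ}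

lemma fnorm_eq (X : Matrix (Fin p₁) (Fin p₂) ℝ) : fnorm X = Real.sqrt (ip X X) := rfl

lemma ip_eq_sum (X Y : Matrix (Fin p₁) (Fin p₂) ℝ) :
    ip X Y = ∑ j, ∑ i, X i j * Y i j := by
  simp [ip, Matrix.trace, Matrix.diag, Matrix.mul_apply, Matrix.transpose_apply]

lemma ip_comm (X Y : Matrix (Fin p₁) (Fin p₂) ℝ) : ip X Y = ip Y X := by
  rw [ip_eq_sum, ip_eq_sum]
  simp [mul_comm]

lemma ip_add_right (X Y Z : Matrix (Fin p₁) (Fin p₂) ℝ) :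
    ip X (Y + Z) = ip X Y + ip X Z := by
  simp [ip, Matrix.mul_add]

lemma ip_sub_right (X Y Z : Matrix (Fin p₁) (Fin p₂) ℝ) :
    ip X (Y - Z) = ip X Y - ip X Z := by
  simp [ip, Matrix.mul_sub]

lemma ip_add_left (X Y Z : Matrix (Fin p₁) (Fin p₂) ℝ) :
    ip (X + Y) Z = ip X Z + ip Y Z := by
  simp [ip, Matrix.add_mul]

lemma ip_smul_right (t : ℝ) (X Y : Matrix (Fin p₁) (Fin p₂) ℝ) :
    ip X (t • Y) = t * ip X Y := by
  simp [ip, Matrix.mul_smul]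

lemma ip_smul_left (t : ℝ) (X Y : Matrix (Fin p₁) (Fin p₂) ℝ) :
    ip (t • X) Y = t * ip X Y := by
  simp [ip, Matrix.smul_mul]

lemma ip_sum_right {n : ℕ} (X : Matrix (Fin p₁) (Fin p₂) ℝ)
    (f : Fin n → Matrix (Fin p₁) (Fin p₂) ℝ) :
    ip X (∑ ℓ, f ℓ) = ∑ ℓ, ip X (f ℓ) := by
  simp [ip, Matrix.mul_sum]

lemma ip_self_nonneg (X : Matrix (Fin p₁) (Fin p₂) ℝ) : 0 ≤ ip X X := by
  rw [ip_eq_sum]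
  apply Finset.sum_nonneg; intro j _
  apply Finset.sum_nonneg; intro i _
  exact mul_self_nonneg _

lemma ip_self_eq_sum_sq (X : Matrix (Fin p₁) (Fin p₂) ℝ) :
    ip X X = ∑ j, ∑ i, X i j ^ 2 := by
  rw [ip_eq_sum]; simp [sq]

lemma fnorm_nonneg (X : Matrix (Fin p₁) (Fin p₂) ℝ) : 0 ≤ fnorm X :=
  Real.sqrt_nonneg _

lemma fnorm_sq (X : Matrix (Fin p₁) (Fin p₂) ℝ) : fnorm X ^ 2 = ip X X := by
  rw [fnorm_eq, Real.sq_sqrt (ip_self_nonneg X)]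

lemma ip_mul_left {q : ℕ} (A : Matrix (Fin p₁) (Fin q) ℝ)
    (X : Matrix (Fin q) (Fin p₂) ℝ) (Y : Matrix (Fin p₁) (Fin p₂) ℝ) :
    ip (A * X) Y = ip X (Aᵀ * Y) := by
  simp [ip, Matrix.transpose_mul, Matrix.mul_assoc]

lemma ip_mul_right {q : ℕ} (X : Matrix (Fin p₁) (Fin q) ℝ)
    (Bm : Matrix (Fin q) (Fin p₂) ℝ) (Y : Matrix (Fin p₁) (Fin p₂) ℝ) :
    ip (X * Bm) Y = ip X (Y * Bmᵀ) := by
  unfold ip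
  rw [Matrix.transpose_mul, Matrix.mul_assoc, Matrix.trace_mul_comm, Matrix.mul_assoc]

lemma ip_transpose (X Y : Matrix (Fin p₁) (Fin p₂) ℝ) : ip Xᵀ Yᵀ = ip X Y := by
  unfold ip
  rw [Matrix.transpose_transpose, Matrix.trace_mul_comm,
    ← Matrix.trace_transpose (Yᵀ * X), Matrix.transpose_mul, Matrix.transpose_transpose]

end Prop7

namespace Prop7
variable {p₁ p₂ : ℕ}

/-- Cauchy–Schwarz for a symmetric PSD form given by a linear map `S`. -/
lemma form_cs (S : Matrix (Fin p₁) (Fin p₂) ℝ → Matrix (Fin p₁) (Fin p₂) ℝ)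
    (hadd : ∀ X Y, S (X + Y) = S X + S Y)
    (hsmul : ∀ (t : ℝ) X, S (t • X) = t • S X)
    (hsym : ∀ X Y, ip X (S Y) = ip (S X) Y)
    (hpos : ∀ X, 0 ≤ ip X (S X))
    (X Y : Matrix (Fin p₁) (Fin p₂) ℝ) :
    ip X (S Y) ^ 2 ≤ ip X (S X) * ip Y (S Y) := by
  have key : ∀ t : ℝ, 0 ≤ ip Y (S Y) *  (t * t) + (2 * ip X (S Y)) * t + ip X (S X) := by
    intro t
    have h0 := hpos (X + t • Y)
    have hyx : ip Y (S X) = ip X (S Y) := by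
      rw [hsym X Y, ip_comm]
    rw [hadd, hsmul] at h0
    rw [ip_add_left, ip_add_right, ip_add_right, ip_smul_left, ip_smul_right,
      ip_smul_left, ip_smul_right, hyx] at h0
    nlinarith [h0]
  have hd : discrim (ip Y (S Y)) (2 * ip X (S Y)) (ip X (S X)) ≤ 0 :=
    discrim_le_zero key
  unfold discrim at hd
  nlinarith [hd]

lemma ip_cs (X Y : Matrix (Fin p₁) (Fin p₂) ℝ) : ip X Y ≤ fnorm X * fnorm Y := by
  have h := form_cs (fun M => M) (fun _ _ => rfl) (fun _ _ => rfl)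
    (fun _ _ => rfl) (fun Z => ip_self_nonneg Z) X Y
  have h2 : ip X Y ≤ Real.sqrt (ip X X * ip Y Y) := by
    calc ip X Y ≤ |ip X Y| := le_abs_self _
    _ = Real.sqrt (ip X Y ^ 2) := by rw [Real.sqrt_sq_eq_abs]
    _ ≤ Real.sqrt (ip X X * ip Y Y) := Real.sqrt_le_sqrt h
  rwa [Real.sqrt_mul (ip_self_nonneg X), ← fnorm_eq, ← fnorm_eq] at h2

lemma fnorm_add_le (X Y : Matrix (Fin p₁) (Fin p₂) ℝ) :
    fnorm (X + Y) ≤ fnorm X + fnorm Y := by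
  have h : ip (X + Y) (X + Y) ≤ (fnorm X + fnorm Y) ^ 2 := by
    rw [ip_add_left, ip_add_right, ip_add_right]
    have := ip_cs X Y
    have hc : ip Y X = ip X Y := ip_comm Y X
    have hx := fnorm_sq X
    have hy := fnorm_sq Y
    nlinarith
  calc fnorm (X + Y) = Real.sqrt (ip (X + Y) (X + Y)) := fnorm_eq _
  _ ≤ Real.sqrt ((fnorm X + fnorm Y) ^ 2) := Real.sqrt_le_sqrt h
  _ = |fnorm X + fnorm Y| := Real.sqrt_sq_eq_abs _
  _ = fnorm X + fnorm Y := abs_of_nonneg (add_nonneg (fnorm_nonneg X) (fnorm_nonneg Y))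

lemma fnorm_smul (t : ℝ) (X : Matrix (Fin p₁) (Fin p₂) ℝ) :
    fnorm (t • X) = |t| * fnorm X := by
  rw [fnorm_eq, ip_smul_left, ip_smul_right, ← mul_assoc, fnorm_eq,
    Real.sqrt_mul (mul_self_nonneg t), Real.sqrt_mul_self_eq_abs t]

lemma fnorm_sum_le {n : ℕ} (f : Fin n → Matrix (Fin p₁) (Fin p₂) ℝ) :
    fnorm (∑ ℓ, f ℓ) ≤ ∑ ℓ, fnorm (f ℓ) := by
  classical
  induction (Finset.univ : Finset (Fin n)) using Finset.induction with
  | empty => simp [fnorm, Matrix.trace]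
  | insert _ _ h ih =>
      rw [Finset.sum_insert h, Finset.sum_insert h]
      exact le_trans (fnorm_add_le _ _) (by linarith [ih])

lemma fnorm_proj_left (A : Matrix (Fin p₁) (Fin p₁) ℝ) (hAs : Aᵀ = A)
    (hAi : A * A = A) (X : Matrix (Fin p₁) (Fin p₂) ℝ) :
    fnorm (A * X) ≤ fnorm X := by
  have h1 : ip (A * X) (A * X) = ip X (A * X) := by
    rw [ip_mul_left, hAs, ← Matrix.mul_assoc, hAi]
  have h2 : fnorm (A * X) ^ 2 ≤ fnorm X * fnorm (A * X) := by
    rw [fnorm_sq, h1]; exact ip_cs _ _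
  rcases (fnorm_nonneg (A * X)).lt_or_eq with h | h
  · nlinarith [h2, h]
  · rw [← h]; exact fnorm_nonneg X

lemma fnorm_proj_right (P : Matrix (Fin p₂) (Fin p₂) ℝ) (hPs : Pᵀ = P)
    (hPi : P * P = P) (X : Matrix (Fin p₁) (Fin p₂) ℝ) :
    fnorm (X * P) ≤ fnorm X := by
  have h1 : ip (X * P) (X * P) = ip X (X * P) := by
    rw [ip_mul_right, hPs, Matrix.mul_assoc, hPi]
  have h2 : fnorm (X * P) ^ 2 ≤ fnorm X * fnorm (X * P) := by
    rw [fnorm_sq, h1]; exact ip_cs _ _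
  rcases (fnorm_nonneg (X * P)).lt_or_eq with h | h
  · nlinarith [h2, h]
  · rw [← h]; exact fnorm_nonneg X

/-- operator norm bound for a symmetric PSD form dominated by `β • id`. -/
lemma form_opnorm (S : Matrix (Fin p₁) (Fin p₂) ℝ → Matrix (Fin p₁) (Fin p₂) ℝ)
    (hadd : ∀ X Y, S (X + Y) = S X + S Y)
    (hsmul : ∀ (t : ℝ) X, S (t • X) = t • S X)
    (hsym : ∀ X Y, ip X (S Y) = ip (S X) Y)
    (hpos : ∀ X, 0 ≤ ip X (S X))
    (β : ℝ) (hβ : 0 ≤ β)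
    (hq : ∀ X, ip X (S X) ≤ β * ip X X)
    (X : Matrix (Fin p₁) (Fin p₂) ℝ) :
    fnorm (S X) ≤ β * fnorm X := by
  set n := fnorm (S X) with hn_def
  have hn : 0 ≤ n := fnorm_nonneg _
  have h2 : ip X (S (S X)) = n ^ 2 := by
    rw [hsym X (S X), ip_comm, ← fnorm_sq]
  have hcs := form_cs S hadd hsmul hsym hpos X (S X)
  rw [h2] at hcs
  have hfx := fnorm_sq X
  have hA0 := hpos X
  have hD0 := hpos (S X)
  have hA : ip X (S X) ≤ β * fnorm X ^ 2 := by rw [hfx]; exact hq X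
  have hD : ip (S X) (S (S X)) ≤ β * n ^ 2 := by
    rw [hn_def, fnorm_sq]; exact hq (S X)
  have hmul : ip X (S X) * ip (S X) (S (S X)) ≤ (β * fnorm X ^ 2) * (β * n ^ 2) := by
    have hb1 : 0 ≤ β * fnorm X ^ 2 := by
      apply mul_nonneg hβ; positivity
    apply mul_le_mul hA hD hD0 hb1
  have h4 : (n ^ 2) ^ 2 ≤ (β * fnorm X * n) ^ 2 := by nlinarith [hcs, hmul]
  have hb : 0 ≤ β * fnorm X * n := mul_nonneg (mul_nonneg hβ (fnorm_nonneg X)) hn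
  have h3 : n ^ 2 ≤ β * fnorm X * n := by
    calc n ^ 2 = Real.sqrt ((n ^ 2) ^ 2) := (Real.sqrt_sq (by positivity)).symm
    _ ≤ Real.sqrt ((β * fnorm X * n) ^ 2) := Real.sqrt_le_sqrt h4
    _ = β * fnorm X * n := Real.sqrt_sq hb
  rcases hn.lt_or_eq with h | h
  · nlinarith [h3, h]
  · rw [← h]; exact mul_nonneg hβ (fnorm_nonneg X)

end Prop7
namespace Prop7

lemma key_col {p q B : ℕ} (hB : 0 < B)
    (Pb : Fin B → Matrix (Fin p) (Fin p) ℝ)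
    (hPb : ∀ ℓ, (Pb ℓ)ᵀ = Pb ℓ ∧ Pb ℓ * Pb ℓ = Pb ℓ)
    (P : Matrix (Fin p) (Fin p) ℝ) (hPs : Pᵀ = P) (hPi : P * P = P)
    (Pav : Matrix (Fin p) (Fin p) ℝ) (hPav : Pav = (B : ℝ)⁻¹ • ∑ ℓ, Pb ℓ)
    (α : ℝ) (hα0 : 0 < α)
    (hσ : ∀ x : Fin p → ℝ, P *ᵥ x = x → α * vnorm x ≤ vnorm ((P * Pav * P) *ᵥ x))
    (n : Matrix (Fin p) (Fin q) ℝ) (hn : P * n = n) :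
    α ^ 2 * ((B : ℝ) * ip n n) ≤ ∑ ℓ, ip n (Pb ℓ * n) := by
  have hBpos : (0 : ℝ) < (B : ℝ) := by exact_mod_cast hB
  -- each summand is a squared norm
  have hc : ∀ ℓ, ip n (Pb ℓ * n) = fnorm (Pb ℓ * n) ^ 2 := by
    intro ℓ
    rw [fnorm_sq, ip_mul_left, (hPb ℓ).1, ← Matrix.mul_assoc, (hPb ℓ).2]
  -- columnwise lower bound
  have hcol : α ^ 2 * ip n n ≤ ip ((P * Pav * P) * n) ((P * Pav * P) * n) := by
    rw [ip_self_eq_sum_sq, ip_self_eq_sum_sq, Finset.mul_sum]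
    apply Finset.sum_le_sum
    intro j _
    set x : Fin p → ℝ := fun i => n i j with hx
    have hx1 : P *ᵥ x = x := by
      funext i
      show ∑ k, P i k * n k j = n i j
      rw [← Matrix.mul_apply, hn]
    have h := hσ x hx1
    have hv0 : 0 ≤ α * vnorm x := mul_nonneg hα0.le (Real.sqrt_nonneg _)
    have hsq := mul_self_le_mul_self hv0 h
    have hvx : vnorm x * vnorm x = ∑ i, x i ^ 2 :=
      Real.mul_self_sqrt (Finset.sum_nonneg fun i _ => sq_nonneg _)
    have hvAx : vnorm ((P * Pav * P) *ᵥ x) * vnorm ((P * Pav * P) *ᵥ x)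
        = ∑ i, ((P * Pav * P) *ᵥ x) i ^ 2 :=
      Real.mul_self_sqrt (Finset.sum_nonneg fun i _ => sq_nonneg _)
    have hAx : ∀ i, ((P * Pav * P) *ᵥ x) i = ((P * Pav * P) * n) i j := by
      intro i
      simp [Matrix.mulVec, dotProduct, Matrix.mul_apply, hx]
    have hxe : ∀ i, x i = n i j := fun i => rfl
    calc α ^ 2 * ∑ i, n i j ^ 2 = (α * vnorm x) * (α * vnorm x) := by
          rw [show (α * vnorm x) * (α * vnorm x) = α ^ 2 * (vnorm x * vnorm x) by ring,
            hvx]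
      _ ≤ vnorm ((P * Pav * P) *ᵥ x) * vnorm ((P * Pav * P) *ᵥ x) := hsq
      _ = ∑ i, ((P * Pav * P) * n) i j ^ 2 := by
          rw [hvAx]; exact Finset.sum_congr rfl fun i _ => by rw [hAx]
  -- rewrite (P Pav P) n as an average
  have hAn : (P * Pav * P) * n = (B : ℝ)⁻¹ • ∑ ℓ, P * (Pb ℓ * n) := by
    rw [Matrix.mul_assoc (P * Pav) P n, hn, Matrix.mul_assoc, hPav,
      Matrix.smul_mul, Matrix.sum_mul, Matrix.mul_smul, Matrix.mul_sum]
  have hfn : fnorm ((P * Pav * P) * n) ≤ (B : ℝ)⁻¹ * ∑ ℓ, fnorm (Pb ℓ * n) := by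
    rw [hAn, fnorm_smul, abs_of_nonneg (by positivity : (0:ℝ) ≤ (B : ℝ)⁻¹)]
    apply mul_le_mul_of_nonneg_left _ (by positivity)
    refine le_trans (fnorm_sum_le _) ?_
    exact Finset.sum_le_sum fun ℓ _ => fnorm_proj_left P hPs hPi _
  have hsqn : fnorm ((P * Pav * P) * n) ^ 2
      ≤ ((B : ℝ)⁻¹ * ∑ ℓ, fnorm (Pb ℓ * n)) ^ 2 :=
    pow_le_pow_left₀ (fnorm_nonneg _) hfn 2
  have hcheb : (∑ ℓ, fnorm (Pb ℓ * n)) ^ 2 ≤ (B : ℝ) * ∑ ℓ, fnorm (Pb ℓ * n) ^ 2 := by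
    have h := sq_sum_le_card_mul_sum_sq (s := (Finset.univ : Finset (Fin B)))
      (f := fun ℓ => fnorm (Pb ℓ * n))
    simpa using h
  have hc' : ∑ ℓ, ip n (Pb ℓ * n) = ∑ ℓ, fnorm (Pb ℓ * n) ^ 2 :=
    Finset.sum_congr rfl fun ℓ _ => hc ℓ
  rw [hc']
  rw [fnorm_sq] at hsqn
  have hfinal : α ^ 2 * ip n n ≤ (B : ℝ)⁻¹ * ∑ ℓ, fnorm (Pb ℓ * n) ^ 2 := by
    have h1 : α ^ 2 * ip n n ≤ ((B : ℝ)⁻¹ * ∑ ℓ, fnorm (Pb ℓ * n)) ^ 2 :=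
      le_trans hcol hsqn
    have h2 : ((B : ℝ)⁻¹ * ∑ ℓ, fnorm (Pb ℓ * n)) ^ 2
        = (B : ℝ)⁻¹ ^ 2 * (∑ ℓ, fnorm (Pb ℓ * n)) ^ 2 := by ring
    have h3 : (B : ℝ)⁻¹ ^ 2 * (∑ ℓ, fnorm (Pb ℓ * n)) ^ 2
        ≤ (B : ℝ)⁻¹ ^ 2 * ((B : ℝ) * ∑ ℓ, fnorm (Pb ℓ * n) ^ 2) :=
      mul_le_mul_of_nonneg_left hcheb (by positivity)
    have h4 : (B : ℝ)⁻¹ ^ 2 * ((B : ℝ) * ∑ ℓ, fnorm (Pb ℓ * n) ^ 2)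
        = (B : ℝ)⁻¹ * ∑ ℓ, fnorm (Pb ℓ * n) ^ 2 := by
      field_simp
    linarith [h1, h3, h2.le, h4.le]
  have := mul_le_mul_of_nonneg_left hfinal hBpos.le
  calc α ^ 2 * ((B : ℝ) * ip n n) = (B : ℝ) * (α ^ 2 * ip n n) := by ring
    _ ≤ (B : ℝ) * ((B : ℝ)⁻¹ * ∑ ℓ, fnorm (Pb ℓ * n) ^ 2) := this
    _ = ∑ ℓ, fnorm (Pb ℓ * n) ^ 2 := by
        rw [← mul_assoc, mul_inv_cancel₀ (ne_of_gt hBpos), one_mul]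

end Prop7
namespace Prop7
variable {p₁ p₂ : ℕ}

lemma ip_sub_left (X Y Z : Matrix (Fin p₁) (Fin p₂) ℝ) :
    ip (X - Y) Z = ip X Z - ip Y Z := by
  simp [ip, Matrix.sub_mul]

lemma ip_zero_right (X : Matrix (Fin p₁) (Fin p₂) ℝ) : ip X (0 : Matrix (Fin p₁) (Fin p₂) ℝ) = 0 := by
  simp [ip]

lemma fnorm_transpose (X : Matrix (Fin p₁) (Fin p₂) ℝ) : fnorm Xᵀ = fnorm X := by
  rw [fnorm_eq, fnorm_eq, ip_transpose]

lemma one_sub_sym (C : Matrix (Fin p₁) (Fin p₁) ℝ) (h : Cᵀ = C) :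
    (1 - C)ᵀ = 1 - C := by
  rw [Matrix.transpose_sub, Matrix.transpose_one, h]

lemma one_sub_idem (C : Matrix (Fin p₁) (Fin p₁) ℝ) (h : C * C = C) :
    (1 - C) * (1 - C) = 1 - C := by
  simp only [Matrix.sub_mul, Matrix.mul_sub, Matrix.one_mul, Matrix.mul_one, h]
  abel

lemma ip_projL (A : Matrix (Fin p₁) (Fin p₁) ℝ) (hAs : Aᵀ = A) (hAi : A * A = A)
    (X : Matrix (Fin p₁) (Fin p₂) ℝ) : ip X (A * X) = fnorm (A * X) ^ 2 := by
  rw [fnorm_sq, ip_mul_left, hAs, ← Matrix.mul_assoc, hAi]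

lemma ip_sandwich (A : Matrix (Fin p₁) (Fin p₁) ℝ) (Bm : Matrix (Fin p₂) (Fin p₂) ℝ)
    (hAs : Aᵀ = A) (hAi : A * A = A) (hBs : Bmᵀ = Bm) (hBi : Bm * Bm = Bm)
    (X : Matrix (Fin p₁) (Fin p₂) ℝ) :
    ip X (A * X * Bm) = fnorm (A * X * Bm) ^ 2 := by
  rw [fnorm_sq]
  conv_rhs => rw [ip_mul_right, hBs, ip_mul_left, hAs]
  congr 1
  rw [Matrix.mul_assoc (A * X) Bm Bm, hBi, ← Matrix.mul_assoc A (A * X) Bm,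
    ← Matrix.mul_assoc A A X, hAi]

end Prop7

set_option maxHeartbeats 1600000 in
open Prop7 in
/-- Proposition 7: if the row/column spaces of `T = T(C,R)` satisfy
`σ_min(P_C P_avg^C P_C) ≥ α` on `C` and `σ_min(P_R P_avg^R P_R) ≥ α` on `R`, where
`P_avg^C`, `P_avg^R`, `P_avg` are the averages of the bagged column-space, row-space and
tangent-space projections, then `‖P_T (I − P_avg) P_T‖₂ ≤ 4(1−α)`; consequently
`σ_min(P_T P_avg P_T)` restricted to `T` is at least `1 − 4(1−α)`, i.e. `T ∈ 𝒯_{1−4(1−α)}`. -/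
theorem modified_algorithm_stable_tangent_space
    {p₁ p₂ B : ℕ} (hB : 0 < B)
    (Cb : Fin B → Matrix (Fin p₁) (Fin p₁) ℝ)
    (Rb : Fin B → Matrix (Fin p₂) (Fin p₂) ℝ)
    (hCb : ∀ ℓ, (Cb ℓ)ᵀ = Cb ℓ ∧ Cb ℓ * Cb ℓ = Cb ℓ)
    (hRb : ∀ ℓ, (Rb ℓ)ᵀ = Rb ℓ ∧ Rb ℓ * Rb ℓ = Rb ℓ)
    (PavgC : Matrix (Fin p₁) (Fin p₁) ℝ) (PavgR : Matrix (Fin p₂) (Fin p₂) ℝ)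
    (hPavgC : PavgC = (B : ℝ)⁻¹ • ∑ ℓ, Cb ℓ)
    (hPavgR : PavgR = (B : ℝ)⁻¹ • ∑ ℓ, Rb ℓ)
    (Pavg : Matrix (Fin p₁) (Fin p₂) ℝ → Matrix (Fin p₁) (Fin p₂) ℝ)
    (hPavg : ∀ M, Pavg M =
      (B : ℝ)⁻¹ • ∑ ℓ, (Cb ℓ * M + M * Rb ℓ - Cb ℓ * M * Rb ℓ))
    (PC : Matrix (Fin p₁) (Fin p₁) ℝ) (PR : Matrix (Fin p₂) (Fin p₂) ℝ)
    (hPCsym : PCᵀ = PC) (hPCidem : PC * PC = PC)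
    (hPRsym : PRᵀ = PR) (hPRidem : PR * PR = PR)
    (PT : Matrix (Fin p₁) (Fin p₂) ℝ → Matrix (Fin p₁) (Fin p₂) ℝ)
    (hPT : ∀ M, PT M = PC * M + M * PR - PC * M * PR)
    (α : ℝ) (hα0 : 0 < α) (hα1 : α ≤ 1)
    (hσC : ∀ x : Fin p₁ → ℝ, PC *ᵥ x = x →
      α * vnorm x ≤ vnorm ((PC * PavgC * PC) *ᵥ x))
    (hσR : ∀ y : Fin p₂ → ℝ, PR *ᵥ y = y →
      α * vnorm y ≤ vnorm ((PR * PavgR * PR) *ᵥ y)) :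
    (∀ M : Matrix (Fin p₁) (Fin p₂) ℝ,
        fnorm (PT (PT M - Pavg (PT M))) ≤ 4 * (1 - α) * fnorm M) ∧
      (∀ M : Matrix (Fin p₁) (Fin p₂) ℝ, PT M = M →
        (1 - 4 * (1 - α)) * fnorm M ≤ fnorm (PT (Pavg (PT M)))) := by
  
  classical
  have hBpos : (0 : ℝ) < (B : ℝ) := by exact_mod_cast hB
  have hβ : (0 : ℝ) ≤ 4 * (1 - α) := by linarith
  -- linearity of PT
  have hPTadd : ∀ X Y, PT (X + Y) = PT X + PT Y := by
    intro X Y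
    simp only [hPT, Matrix.mul_add, Matrix.add_mul]
    abel
  have hPTsub : ∀ X Y, PT (X - Y) = PT X - PT Y := by
    intro X Y
    simp only [hPT, Matrix.mul_sub, Matrix.sub_mul]
    abel
  have hPTsmul : ∀ (t : ℝ) X, PT (t • X) = t • PT X := by
    intro t X
    simp only [hPT, Matrix.mul_smul, Matrix.smul_mul, smul_sub, smul_add]
  -- linearity of Pavg
  have hPavgadd : ∀ X Y, Pavg (X + Y) = Pavg X + Pavg Y := by
    intro X Y
    simp only [hPavg]
    rw [← smul_add, ← Finset.sum_add_distrib]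
    congr 1
    refine Finset.sum_congr rfl fun ℓ _ => ?_
    simp only [Matrix.mul_add, Matrix.add_mul]
    abel
  have hPavgsmul : ∀ (t : ℝ) X, Pavg (t • X) = t • Pavg X := by
    intro t X
    calc Pavg (t • X)
        = (B : ℝ)⁻¹ • ∑ ℓ, t • (Cb ℓ * X + X * Rb ℓ - Cb ℓ * X * Rb ℓ) := by
          rw [hPavg]
          congr 1
          refine Finset.sum_congr rfl fun ℓ _ => ?_
          simp only [Matrix.mul_smul, Matrix.smul_mul, smul_sub, smul_add]
      _ = t • Pavg X := by
          rw [← Finset.smul_sum, smul_comm ((B : ℝ)⁻¹) t, hPavg]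
  -- self-adjointness of PT
  have hPTsa : ∀ X Y, ip X (PT Y) = ip (PT X) Y := by
    intro X Y
    have e1 : ip (PC * X) Y = ip X (PC * Y) := by rw [ip_mul_left, hPCsym]
    have e2 : ip (X * PR) Y = ip X (Y * PR) := by rw [ip_mul_right, hPRsym]
    have e3 : ip (PC * X * PR) Y = ip X (PC * Y * PR) := by
      rw [ip_mul_right, hPRsym, ip_mul_left, hPCsym, Matrix.mul_assoc]
    rw [hPT, hPT, ip_sub_right, ip_add_right, ip_sub_left, ip_add_left, e1, e2, e3]
  -- self-adjointness of Pavg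
  have hPavgsa : ∀ X Y, ip X (Pavg Y) = ip (Pavg X) Y := by
    intro X Y
    simp only [hPavg]
    rw [ip_smul_right, ip_smul_left, ip_sum_right, ip_comm, ip_sum_right, Finset.mul_sum,
      Finset.mul_sum]
    refine Finset.sum_congr rfl fun ℓ _ => ?_
    have e1 : ip (Cb ℓ * X) Y = ip X (Cb ℓ * Y) := by rw [ip_mul_left, (hCb ℓ).1]
    have e2 : ip (X * Rb ℓ) Y = ip X (Y * Rb ℓ) := by rw [ip_mul_right, (hRb ℓ).1]
    have e3 : ip (Cb ℓ * X * Rb ℓ) Y = ip X (Cb ℓ * Y * Rb ℓ) := by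
      rw [ip_mul_right, (hRb ℓ).1, ip_mul_left, (hCb ℓ).1, Matrix.mul_assoc]
    rw [ip_comm Y _, ip_sub_right, ip_add_right, ip_sub_left, ip_add_left, e1, e2, e3]
  -- PT idempotent
  have hPTidem : ∀ X, PT (PT X) = PT X := by
    intro X
    have hA : PC * PT X = PC * X := by
      rw [hPT]
      simp only [Matrix.mul_add, Matrix.mul_sub, ← Matrix.mul_assoc, hPCidem]
      abel
    have hB2 : PT X * PR = X * PR := by
      rw [hPT]
      simp only [Matrix.add_mul, Matrix.sub_mul, Matrix.mul_assoc, hPRidem]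
      abel
    rw [hPT (PT X), hA, hB2, ← hPT]
  -- symmetry of S
  have hSsym : ∀ X Y, ip X (PT (PT Y - Pavg (PT Y))) = ip (PT (PT X - Pavg (PT X))) Y := by
    intro X Y
    have hE : ∀ U V, ip U (V - Pavg V) = ip (U - Pavg U) V := by
      intro U V; rw [ip_sub_right, ip_sub_left, hPavgsa]
    calc ip X (PT (PT Y - Pavg (PT Y))) = ip (PT X) (PT Y - Pavg (PT Y)) := hPTsa _ _
      _ = ip (PT X - Pavg (PT X)) (PT Y) := hE _ _
      _ = ip (PT (PT X - Pavg (PT X))) Y := hPTsa _ _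
  -- additivity/homogeneity of S
  have hSadd : ∀ X Y, PT (PT (X + Y) - Pavg (PT (X + Y)))
      = PT (PT X - Pavg (PT X)) + PT (PT Y - Pavg (PT Y)) := by
    intro X Y
    rw [hPTadd X Y, hPavgadd, add_sub_add_comm, hPTadd]
  have hSsmul : ∀ (t : ℝ) X, PT (PT (t • X) - Pavg (PT (t • X)))
      = t • PT (PT X - Pavg (PT X)) := by
    intro t X
    rw [hPTsmul t X, hPavgsmul, ← smul_sub, hPTsmul]
  -- main quadratic form bounds
  have hq : ∀ X, 0 ≤ ip X (PT (PT X - Pavg (PT X))) ∧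
      ip X (PT (PT X - Pavg (PT X))) ≤ 4 * (1 - α) * ip X X := by
    intro X
    set N := PT X with hNdef
    set n1 := PC * X with hn1def
    set n2 := (X - PC * X) * PR with hn2def
    have hN : N = n1 + n2 := by
      rw [hNdef, hPT, hn1def, hn2def]
      simp only [Matrix.sub_mul]
      abel
    have hn1p : PC * n1 = n1 := by rw [hn1def, ← Matrix.mul_assoc, hPCidem]
    have hn2p : PR * n2ᵀ = n2ᵀ := by
      rw [hn2def, Matrix.transpose_mul, hPRsym, ← Matrix.mul_assoc, hPRidem]
    -- defect decomposition
    have hD : N - Pavg N = (B : ℝ)⁻¹ • ∑ ℓ, (1 - Cb ℓ) * N * (1 - Rb ℓ) := by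
      rw [hPavg]
      have hNsum : N = (B : ℝ)⁻¹ • ∑ _ℓ : Fin B, N := by
        rw [Finset.sum_const, Finset.card_univ, Fintype.card_fin,
          ← Nat.cast_smul_eq_nsmul ℝ B N, smul_smul, inv_mul_cancel₀ (ne_of_gt hBpos),
          one_smul]
      nth_rewrite 1 [hNsum]
      rw [← smul_sub, ← Finset.sum_sub_distrib]
      congr 1
      refine Finset.sum_congr rfl fun ℓ _ => ?_
      simp only [Matrix.sub_mul, Matrix.mul_sub, Matrix.one_mul, Matrix.mul_one]
      abel
    -- quadratic form expression
    have hqX : ip X (PT (N - Pavg N)) = (B : ℝ)⁻¹ * ∑ ℓ, ip N ((1 - Cb ℓ) * N * (1 - Rb ℓ)) := by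
      rw [hPTsa, ← hNdef, hD, ip_smul_right, ip_sum_right]
    -- per-term facts
    have hQsq : ∀ ℓ, ip N ((1 - Cb ℓ) * N * (1 - Rb ℓ))
        = fnorm ((1 - Cb ℓ) * N * (1 - Rb ℓ)) ^ 2 := fun ℓ =>
      ip_sandwich _ _ (one_sub_sym _ (hCb ℓ).1) (one_sub_idem _ (hCb ℓ).2)
        (one_sub_sym _ (hRb ℓ).1) (one_sub_idem _ (hRb ℓ).2) N
    have hQle : ∀ ℓ, fnorm ((1 - Cb ℓ) * N * (1 - Rb ℓ))
        ≤ fnorm ((1 - Cb ℓ) * n1) + fnorm (n2 * (1 - Rb ℓ)) := by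
      intro ℓ
      have hsplit : (1 - Cb ℓ) * N * (1 - Rb ℓ)
          = (1 - Cb ℓ) * n1 * (1 - Rb ℓ) + (1 - Cb ℓ) * (n2 * (1 - Rb ℓ)) := by
        rw [hN]
        simp only [Matrix.mul_add, Matrix.add_mul, Matrix.mul_assoc]
      calc fnorm ((1 - Cb ℓ) * N * (1 - Rb ℓ))
          ≤ fnorm ((1 - Cb ℓ) * n1 * (1 - Rb ℓ)) + fnorm ((1 - Cb ℓ) * (n2 * (1 - Rb ℓ))) := by
            rw [hsplit]; exact fnorm_add_le _ _
        _ ≤ fnorm ((1 - Cb ℓ) * n1) + fnorm (n2 * (1 - Rb ℓ)) :=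
            add_le_add
              (fnorm_proj_right _ (one_sub_sym _ (hRb ℓ).1) (one_sub_idem _ (hRb ℓ).2) _)
              (fnorm_proj_left _ (one_sub_sym _ (hCb ℓ).1) (one_sub_idem _ (hCb ℓ).2) _)
    have haid : ∀ ℓ, fnorm ((1 - Cb ℓ) * n1) ^ 2 = ip n1 n1 - ip n1 (Cb ℓ * n1) := by
      intro ℓ
      rw [← ip_projL _ (one_sub_sym _ (hCb ℓ).1) (one_sub_idem _ (hCb ℓ).2) n1,
        Matrix.sub_mul, Matrix.one_mul, ip_sub_right]
    have hbid : ∀ ℓ, fnorm (n2 * (1 - Rb ℓ)) ^ 2 = ip n2 n2 - ip n2ᵀ (Rb ℓ * n2ᵀ) := by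
      intro ℓ
      have ht : fnorm (n2 * (1 - Rb ℓ)) = fnorm ((1 - Rb ℓ) * n2ᵀ) := by
        rw [← fnorm_transpose (n2 * (1 - Rb ℓ)), Matrix.transpose_mul,
          one_sub_sym _ (hRb ℓ).1]
      rw [ht, ← ip_projL _ (one_sub_sym _ (hRb ℓ).1) (one_sub_idem _ (hRb ℓ).2) n2ᵀ,
        Matrix.sub_mul, Matrix.one_mul, ip_sub_right, ip_transpose]
    -- key_col applications
    have hKC := key_col hB Cb hCb PC hPCsym hPCidem PavgC hPavgC α hα0 hσC n1 hn1p
    have hKR := key_col hB Rb hRb PR hPRsym hPRidem PavgR hPavgR α hα0 hσR n2ᵀ hn2p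
    have hipT : ip n2ᵀ n2ᵀ = ip n2 n2 := ip_transpose n2 n2
    -- sum bounds
    have hsumA : ∑ ℓ, fnorm ((1 - Cb ℓ) * n1) ^ 2 ≤ (B : ℝ) * (1 - α ^ 2) * ip n1 n1 := by
      have : ∑ ℓ, fnorm ((1 - Cb ℓ) * n1) ^ 2
          = (B : ℝ) * ip n1 n1 - ∑ ℓ, ip n1 (Cb ℓ * n1) := by
        rw [Finset.sum_congr rfl fun ℓ _ => haid ℓ, Finset.sum_sub_distrib,
          Finset.sum_const, Finset.card_univ, Fintype.card_fin, nsmul_eq_mul]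
      rw [this]
      nlinarith [hKC]
    have hsumB : ∑ ℓ, fnorm (n2 * (1 - Rb ℓ)) ^ 2 ≤ (B : ℝ) * (1 - α ^ 2) * ip n2 n2 := by
      have : ∑ ℓ, fnorm (n2 * (1 - Rb ℓ)) ^ 2
          = (B : ℝ) * ip n2 n2 - ∑ ℓ, ip n2ᵀ (Rb ℓ * n2ᵀ) := by
        rw [Finset.sum_congr rfl fun ℓ _ => hbid ℓ, Finset.sum_sub_distrib,
          Finset.sum_const, Finset.card_univ, Fintype.card_fin, nsmul_eq_mul]
      rw [this]
      rw [hipT] at hKR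
      nlinarith [hKR]
    -- orthogonality
    have horth : ip n1 n2 = 0 := by
      have hz : PC * n2 = 0 := by
        rw [hn2def, ← Matrix.mul_assoc, Matrix.mul_sub, ← Matrix.mul_assoc, hPCidem,
          sub_self, Matrix.zero_mul]
      rw [hn1def, ip_mul_left, hPCsym, hz, ip_zero_right]
    have hNN : ip N N = ip n1 n1 + ip n2 n2 := by
      rw [hN, ip_add_left, ip_add_right, ip_add_right, horth, ip_comm n2 n1, horth]
      ring
    -- contraction of PT
    have hNX : ip N N ≤ ip X X := by
      have e : PT N = N := by rw [hNdef]; exact hPTidem X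
      have h1 : ip X N = ip N N := by
        rw [← e, hPTsa, ← hNdef, e]
      have h2 : ip N N ≤ fnorm X * fnorm N := by rw [← h1]; exact ip_cs X N
      have h3 : fnorm N ^ 2 ≤ fnorm X * fnorm N := by rw [fnorm_sq]; exact h2
      have h4 : fnorm N ≤ fnorm X := by
        rcases (fnorm_nonneg N).lt_or_eq with h | h
        · nlinarith [h3, h]
        · rw [← h]; exact fnorm_nonneg X
      calc ip N N = fnorm N ^ 2 := (fnorm_sq N).symm
        _ ≤ fnorm X ^ 2 := by nlinarith [fnorm_nonneg N, fnorm_nonneg X]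
        _ = ip X X := fnorm_sq X
    -- assemble
    have hn1nn : 0 ≤ ip n1 n1 := ip_self_nonneg n1
    have hn2nn : 0 ≤ ip n2 n2 := ip_self_nonneg n2
    constructor
    · rw [hqX]
      apply mul_nonneg (by positivity)
      apply Finset.sum_nonneg
      intro ℓ _
      rw [hQsq ℓ]
      positivity
    · rw [hqX]
      have hper : ∀ ℓ, ip N ((1 - Cb ℓ) * N * (1 - Rb ℓ))
          ≤ 2 * fnorm ((1 - Cb ℓ) * n1) ^ 2 + 2 * fnorm (n2 * (1 - Rb ℓ)) ^ 2 := by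
        intro ℓ
        rw [hQsq ℓ]
        have h1 := hQle ℓ
        have h2 : (0:ℝ) ≤ fnorm ((1 - Cb ℓ) * N * (1 - Rb ℓ)) := fnorm_nonneg _
        nlinarith [sq_nonneg (fnorm ((1 - Cb ℓ) * n1) - fnorm (n2 * (1 - Rb ℓ)))]
      have hsum : ∑ ℓ, ip N ((1 - Cb ℓ) * N * (1 - Rb ℓ))
          ≤ 2 * ∑ ℓ, fnorm ((1 - Cb ℓ) * n1) ^ 2
            + 2 * ∑ ℓ, fnorm (n2 * (1 - Rb ℓ)) ^ 2 := by
        calc ∑ ℓ, ip N ((1 - Cb ℓ) * N * (1 - Rb ℓ))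
            ≤ ∑ ℓ, (2 * fnorm ((1 - Cb ℓ) * n1) ^ 2 + 2 * fnorm (n2 * (1 - Rb ℓ)) ^ 2) :=
              Finset.sum_le_sum fun ℓ _ => hper ℓ
          _ = 2 * ∑ ℓ, fnorm ((1 - Cb ℓ) * n1) ^ 2
              + 2 * ∑ ℓ, fnorm (n2 * (1 - Rb ℓ)) ^ 2 := by
              rw [Finset.sum_add_distrib, ← Finset.mul_sum, ← Finset.mul_sum]
      have htot : ∑ ℓ, ip N ((1 - Cb ℓ) * N * (1 - Rb ℓ))
          ≤ 2 * (B : ℝ) * (1 - α ^ 2) * (ip n1 n1 + ip n2 n2) := by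
        nlinarith [hsum, hsumA, hsumB]
      have hBinv : (0:ℝ) < (B : ℝ)⁻¹ := by positivity
      calc (B : ℝ)⁻¹ * ∑ ℓ, ip N ((1 - Cb ℓ) * N * (1 - Rb ℓ))
          ≤ (B : ℝ)⁻¹ * (2 * (B : ℝ) * (1 - α ^ 2) * (ip n1 n1 + ip n2 n2)) :=
            mul_le_mul_of_nonneg_left htot hBinv.le
        _ = 2 * (1 - α ^ 2) * (ip n1 n1 + ip n2 n2) := by
            field_simp
        _ ≤ 4 * (1 - α) * (ip n1 n1 + ip n2 n2) := by
            nlinarith [sq_nonneg (1 - α), add_nonneg hn1nn hn2nn]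
        _ = 4 * (1 - α) * ip N N := by rw [hNN]
        _ ≤ 4 * (1 - α) * ip X X := mul_le_mul_of_nonneg_left hNX hβ
  -- conclude part 1 via operator norm lemma
  have part1 : ∀ M : Matrix (Fin p₁) (Fin p₂) ℝ,
      fnorm (PT (PT M - Pavg (PT M))) ≤ 4 * (1 - α) * fnorm M := by
    intro M
    exact form_opnorm (fun X => PT (PT X - Pavg (PT X))) hSadd hSsmul hSsym
      (fun X => (hq X).1) (4 * (1 - α)) hβ (fun X => (hq X).2) M
  refine ⟨part1, ?_⟩
  intro M hM
  have h1 := part1 M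
  have hkey : PT (PT M - Pavg (PT M)) = M - PT (Pavg (PT M)) := by
    rw [hPTsub, hPTidem, hM]
  have htri : fnorm M ≤ fnorm (PT (PT M - Pavg (PT M))) + fnorm (PT (Pavg (PT M))) := by
    have hMeq : M = (M - PT (Pavg (PT M))) + PT (Pavg (PT M)) := by abel
    calc fnorm M = fnorm ((M - PT (Pavg (PT M))) + PT (Pavg (PT M))) := by rw [← hMeq]
      _ ≤ fnorm (M - PT (Pavg (PT M))) + fnorm (PT (Pavg (PT M))) := fnorm_add_le _ _
      _ = fnorm (PT (PT M - Pavg (PT M))) + fnorm (PT (Pavg (PT M))) := by rw [hkey]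
  linarith [h1, htri]
end
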